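/- Let p be a prime and let R be a discrete valuation ring of characteristic p whose residue field is finite with q elements. Let 1 ≤ n ≤ m be integers, set W := (1+𝔪)/(1+𝔪^m), and let V ⊆ W be the image of the subgroup 1+𝔪^n in W. Then the quotient V/(V ∩ W^p) is a finite group of order q^{(m − ⌈m/p⌉) − (n − ⌈n/p⌉)}. -/

import Mathlib

open IsLocalRing Subgroup

namespace Stmt3Aux

variable (R : Type*) [CommRing R] [IsDomain R] [IsDiscreteValuationRing R]

/-- The subgroup `1 + 𝔪^k` of `Rˣ`. -/
def UU (k : ℕ) : Subgroup Rˣ where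
  carrier := {u : Rˣ | (u : R) - 1 ∈ maximalIdeal R ^ k}
  one_mem' := by simp
  mul_mem' := by
    intro u v hu hv
    have h : ((u * v : Rˣ) : R) - 1
        = ((u : R) - 1) * ((v : R) - 1) + (((u : R) - 1) + ((v : R) - 1)) := by
      push_cast; ring
    show ((u * v : Rˣ) : R) - 1 ∈ maximalIdeal R ^ k
    rw [h]
    exact add_mem (Ideal.mul_mem_left _ _ hv) (add_mem hu hv)
  inv_mem' := by
    intro u hu
    have h : ((u⁻¹ : Rˣ) : R) - 1 = -((u⁻¹ : Rˣ) * ((u : R) - 1)) := by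
      have : ((u⁻¹ : Rˣ) : R) * (u : R) = 1 := u.inv_mul
      push_cast
      linear_combination this
    show ((u⁻¹ : Rˣ) : R) - 1 ∈ maximalIdeal R ^ k
    rw [h]
    exact neg_mem (Ideal.mul_mem_left _ _ hu)

variable {R}

lemma mem_UU {k : ℕ} {u : Rˣ} : u ∈ UU R k ↔ (u : R) - 1 ∈ maximalIdeal R ^ k := Iff.rfl

lemma UU_mono {j k : ℕ} (h : j ≤ k) : UU R k ≤ UU R j :=
  fun _ hu => Ideal.pow_le_pow_right h hu

lemma nat_fact1 {p j : ℕ} (hp : 0 < p) : j ≤ p * ((j + p - 1) / p) := by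
  have h1 : p * ((j + p - 1) / p) + (j + p - 1) % p = j + (p - 1) := by
    rw [Nat.div_add_mod]; omega
  have h2' : (j + p - 1) % p ≤ p - 1 :=
    Nat.le_sub_one_of_lt (Nat.mod_lt _ hp)
  linarith [h1, h2']

lemma nat_fact2 {p j s : ℕ} (hp : 0 < p) (h : j ≤ p * s) : (j + p - 1) / p ≤ s := by
  rw [Nat.div_le_iff_le_mul_add_pred hp, Nat.add_sub_assoc hp]
  exact Nat.add_le_add_right h _

/-- `x^p ∈ 𝔪^j ↔ x ∈ 𝔪^⌈j/p⌉`. -/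
lemma pow_mem_iff {p : ℕ} (hp : 0 < p) (x : R) (j : ℕ) :
    x ^ p ∈ maximalIdeal R ^ j ↔ x ∈ maximalIdeal R ^ ((j + p - 1) / p) := by
  obtain ⟨π, hπ⟩ := IsDiscreteValuationRing.exists_irreducible R
  rw [hπ.maximalIdeal_eq, Ideal.span_singleton_pow, Ideal.span_singleton_pow,
    Ideal.mem_span_singleton, Ideal.mem_span_singleton]
  constructor
  · intro h
    rcases eq_or_ne x 0 with rfl | hx
    · exact dvd_zero _
    obtain ⟨s, u, rfl⟩ := IsDiscreteValuationRing.eq_unit_mul_pow_irreducible hx hπ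
    have h2 : π ^ j ∣ (π ^ s) ^ p := by
      have : ((u : R) * π ^ s) ^ p = (u ^ p : Rˣ) * (π ^ s) ^ p := by push_cast; ring
      rw [this] at h
      exact (Units.dvd_mul_left ..).mp h
    rw [← pow_mul] at h2
    have hj : j ≤ s * p := (pow_dvd_pow_iff hπ.ne_zero hπ.not_isUnit).mp h2
    have : (j + p - 1) / p ≤ s := nat_fact2 hp (by rwa [mul_comm p s])
    exact Dvd.dvd.mul_left (pow_dvd_pow π this) _
  · intro h
    have h2 : π ^ (p * ((j + p - 1) / p)) ∣ x ^ p := by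
      rw [mul_comm, pow_mul]
      exact pow_dvd_pow_of_dvd h p
    exact dvd_trans (pow_dvd_pow π (nat_fact1 hp)) h2

/-- A unit `1 + x` for `x ∈ 𝔪^k`, as an element of `UU R k`. -/
noncomputable def unitOfMem {k : ℕ} (hk : 1 ≤ k) {x : R} (hx : x ∈ maximalIdeal R ^ k) :
    ↥(UU R k) := by
  have hxm : x ∈ maximalIdeal R := Ideal.pow_le_self (by omega) hx
  have hu : IsUnit (1 + x) := by
    by_contra hu
    have h1 : (1 : R) + x ∈ maximalIdeal R := (mem_maximalIdeal _).mpr hu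
    have : (1 : R) ∈ maximalIdeal R := by
      have := sub_mem h1 hxm; simpa using this
    exact (maximalIdeal.isMaximal R).ne_top (Ideal.eq_top_of_isUnit_mem _ this isUnit_one)
  exact ⟨hu.unit, by simp [mem_UU, hu.unit_spec, hx]⟩

@[simp] lemma coe_unitOfMem {k : ℕ} (hk : 1 ≤ k) {x : R} (hx : x ∈ maximalIdeal R ^ k) :
    ((unitOfMem hk hx : ↥(UU R k)) : Rˣ) = (1 + x : R) := by
  simp [unitOfMem, IsUnit.unit_spec]


lemma inv_mul_mem_UU_iff {k : ℕ} (u v : Rˣ) :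
    u⁻¹ * v ∈ UU R k ↔ (v : R) - (u : R) ∈ maximalIdeal R ^ k := by
  rw [mem_UU]
  have e1 : (u : R) * (((u⁻¹ * v : Rˣ) : R) - 1) = (v : R) - (u : R) := by
    push_cast
    linear_combination (v : R) * u.mul_inv
  have e2 : ((u⁻¹ * v : Rˣ) : R) - 1 = ((u⁻¹ : Rˣ) : R) * ((v : R) - (u : R)) := by
    push_cast
    linear_combination u.inv_mul
  constructor
  · intro h
    have := Ideal.mul_mem_left _ ((u : R)) h
    rwa [e1] at this
  · intro h
    rw [e2]
    exact Ideal.mul_mem_left _ _ h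

set_option maxHeartbeats 1000000 in
lemma step (q : ℕ) (hq : Nat.card (ResidueField R) = q) (c : ℕ) (hc : 1 ≤ c) :
    (UU R (c + 1)).relIndex (UU R c) = q := by
  obtain ⟨π, hπ⟩ := IsDiscreteValuationRing.exists_irreducible R
  have hmem : ∀ r : R, r * π ^ c ∈ maximalIdeal R ^ c := fun r => by
    rw [hπ.maximalIdeal_eq, Ideal.span_singleton_pow]
    exact Ideal.mem_span_singleton'.mpr ⟨r, rfl⟩
  set K : Subgroup ↥(UU R c) := (UU R (c + 1)).subgroupOf (UU R c) with hK
  have hadd : ∀ x y : R,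
      (Additive.ofMul (QuotientGroup.mk (unitOfMem hc (hmem (x + y))) : ↥(UU R c) ⧸ K))
        = Additive.ofMul ((QuotientGroup.mk (unitOfMem hc (hmem x)) : ↥(UU R c) ⧸ K))
          + Additive.ofMul ((QuotientGroup.mk (unitOfMem hc (hmem y)) : ↥(UU R c) ⧸ K)) := by
    intro x y
    rw [← ofMul_mul]
    apply congrArg Additive.ofMul
    rw [← QuotientGroup.mk_mul, QuotientGroup.eq, hK, Subgroup.mem_subgroupOf]
    have : ((((unitOfMem hc (hmem (x + y)))⁻¹ *
        (unitOfMem hc (hmem x) * unitOfMem hc (hmem y)) : ↥(UU R c)) : Rˣ))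
        = ((unitOfMem hc (hmem (x + y)) : Rˣ))⁻¹ *
          ((unitOfMem hc (hmem x) : Rˣ) * (unitOfMem hc (hmem y) : Rˣ)) := rfl
    rw [this, inv_mul_mem_UU_iff]
    push_cast
    rw [coe_unitOfMem, coe_unitOfMem, coe_unitOfMem]
    have e : (1 + x * π ^ c) * (1 + y * π ^ c) - (1 + (x + y) * π ^ c)
        = (x * π ^ c) * (y * π ^ c) := by ring
    rw [e, pow_succ]
    exact Ideal.mul_mem_mul (hmem x) (Ideal.pow_le_self (by omega) (hmem y))
  let φ : R →+ Additive (↥(UU R c) ⧸ K) :=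
    AddMonoidHom.mk' (G := Additive (↥(UU R c) ⧸ K)) (fun r => Additive.ofMul (QuotientGroup.mk (unitOfMem hc (hmem r)))) hadd
  have hsurj' : ∀ y : ↥(UU R c) ⧸ K, ∃ r : R,
      (QuotientGroup.mk (unitOfMem hc (hmem r)) : ↥(UU R c) ⧸ K) = y := by
    intro y
    obtain ⟨u, hu⟩ := QuotientGroup.mk_surjective y
    have h1 : ((u : Rˣ) : R) - 1 ∈ Ideal.span {π ^ c} := by
      have := u.2
      rwa [mem_UU, hπ.maximalIdeal_eq, Ideal.span_singleton_pow] at this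
    obtain ⟨r, hr⟩ := Ideal.mem_span_singleton'.mp h1
    refine ⟨r, ?_⟩
    have : unitOfMem hc (hmem r) = u := by
      apply Subtype.ext
      apply Units.ext
      rw [coe_unitOfMem]
      rw [hr]
      ring
    rw [this, hu]
  have hsurj : Function.Surjective φ := by
    intro x
    obtain ⟨r, hr⟩ := hsurj' (Additive.toMul x)
    exact ⟨r, congrArg Additive.ofMul hr⟩
  have hker : φ.ker = (maximalIdeal R).toAddSubgroup := by
    ext r
    show Additive.ofMul (QuotientGroup.mk (unitOfMem hc (hmem r))) = 0 ↔ _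
    rw [show (0 : Additive (↥(UU R c) ⧸ K)) = Additive.ofMul 1 from rfl]
    rw [Additive.ofMul.apply_eq_iff_eq, QuotientGroup.eq_one_iff, hK,
      Subgroup.mem_subgroupOf, mem_UU, coe_unitOfMem, add_sub_cancel_left]
    rw [hπ.maximalIdeal_eq, Ideal.span_singleton_pow, Ideal.mem_span_singleton,
      Submodule.mem_toAddSubgroup, Ideal.mem_span_singleton]
    constructor
    · rintro ⟨t, ht⟩
      refine ⟨t, ?_⟩
      have hc0 : (π : R) ^ c ≠ 0 := pow_ne_zero _ hπ.ne_zero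
      apply mul_right_cancel₀ hc0
      rw [ht]
      ring
    · rintro ⟨t, rfl⟩
      exact ⟨t, by ring⟩
  have e2 : Nat.card (↥(UU R c) ⧸ K) = Nat.card (Additive (↥(UU R c) ⧸ K)) :=
    Nat.card_congr Additive.ofMul
  have equiv3 := QuotientAddGroup.quotientKerEquivOfSurjective φ (by exact hsurj)
  have e3 := Nat.card_congr equiv3.toEquiv
  rw [hker] at e3
  have e4 : Nat.card (R ⧸ (maximalIdeal R).toAddSubgroup) = Nat.card (ResidueField R) := rfl
  show Nat.card (↥(UU R c) ⧸ K) = q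
  rw [e2, ← e3, e4, hq]

lemma core (q : ℕ) (hq : Nat.card (ResidueField R) = q) {c : ℕ} (j : ℕ) (hc : 1 ≤ c) :
    (UU R (c + j)).relIndex (UU R c) = q ^ j := by
  induction j with
  | zero => simpa using Subgroup.relIndex_self _
  | succ j ih =>
    have h1 : UU R (c + j + 1) ≤ UU R (c + j) := UU_mono (by omega)
    have h2 : UU R (c + j) ≤ UU R c := UU_mono (by omega)
    have := Subgroup.relIndex_mul_relIndex _ _ _ h1 h2
    show (UU R (c + j + 1)).relIndex (UU R c) = q ^ (j + 1)
    rw [← this, ih, step q hq (c + j) (by omega), pow_succ, mul_comm]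


section CharP

variable {p : ℕ} [Fact p.Prime] [CharP R p]

lemma coe_pow_sub_one (u : Rˣ) :
    ((u ^ p : Rˣ) : R) - 1 = ((u : R) - 1) ^ p := by
  have h : (((u : R) - 1) + 1) ^ p = ((u : R) - 1) ^ p + 1 ^ p := add_pow_char ..
  push_cast
  rw [show (u : R) = ((u : R) - 1) + 1 by ring, h]
  ring

lemma pow_mem_UU_iff (hp : 0 < p) (u : Rˣ) (j : ℕ) :
    u ^ p ∈ UU R j ↔ u ∈ UU R ((j + p - 1) / p) := by
  rw [mem_UU, coe_pow_sub_one, pow_mem_iff hp, mem_UU]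

lemma claim1 (hp : 0 < p) {n m : ℕ} (hn : 1 ≤ n) (hnm : n ≤ m) :
    UU R n ⊓ (Subgroup.map (powMonoidHom p) (UU R 1) ⊔ UU R m)
      = Subgroup.map (powMonoidHom p) (UU R ((n + p - 1) / p)) ⊔ UU R m := by
  set a := (n + p - 1) / p with ha
  have ha1 : 1 ≤ a := (Nat.one_le_div_iff hp).mpr (by omega)
  apply le_antisymm
  · intro u hu
    obtain ⟨hun, hsup⟩ := Subgroup.mem_inf.mp hu
    obtain ⟨s, hs, t, ht, hst⟩ := Subgroup.mem_sup.mp hsup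
    obtain ⟨v, hv, rfl⟩ := hs
    have hvp : v ^ p ∈ UU R n := by
      have h1 : powMonoidHom p v * t * t⁻¹ ∈ UU R n :=
        mul_mem (hst ▸ hun) (inv_mem (UU_mono hnm ht))
      simpa [powMonoidHom_apply] using h1
    have hva : v ∈ UU R a := (pow_mem_UU_iff hp v n).mp hvp
    exact Subgroup.mem_sup.mpr ⟨powMonoidHom p v, Subgroup.mem_map_of_mem _ hva, t, ht, hst⟩
  · apply le_inf
    · apply sup_le _ (UU_mono hnm)
      rintro s ⟨v, hv, rfl⟩
      have : v ^ p ∈ UU R n := (pow_mem_UU_iff hp v n).mpr hv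
      simpa [powMonoidHom_apply] using this
    · exact sup_le (le_trans (Subgroup.map_mono (UU_mono ha1)) le_sup_left) le_sup_right

set_option maxHeartbeats 1000000 in
lemma mid (hp : 0 < p) (a m : ℕ) (hab : a ≤ (m + p - 1) / p) :
    (UU R m).relIndex (Subgroup.map (powMonoidHom p) (UU R a) ⊔ UU R m)
      = (UU R ((m + p - 1) / p)).relIndex (UU R a) := by
  set b := (m + p - 1) / p with hb
  set T : Subgroup Rˣ := Subgroup.map (powMonoidHom p) (UU R a) ⊔ UU R m with hT
  have hle : Subgroup.map (powMonoidHom p) (UU R a) ≤ T := le_sup_left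
  have hmemT : ∀ u : ↥(UU R a), ((powMonoidHom p).domRestrict (UU R a)) u ∈ T :=
    fun u => hle (Subgroup.mem_map_of_mem _ u.2)
  let g : ↥(UU R a) →* ↥T := ((powMonoidHom p).domRestrict (UU R a)).codRestrict T hmemT
  let ψ := (QuotientGroup.mk' ((UU R m).subgroupOf T)).comp g
  have hsurj : Function.Surjective ψ := by
    intro y
    obtain ⟨⟨w, hw⟩, rfl⟩ := QuotientGroup.mk'_surjective _ y
    obtain ⟨s, hs, t, ht, hst⟩ := Subgroup.mem_sup.mp hw
    obtain ⟨v, hv, rfl⟩ := hs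
    refine ⟨⟨v, hv⟩, ?_⟩
    show QuotientGroup.mk (g ⟨v, hv⟩) = QuotientGroup.mk (⟨w, hw⟩ : ↥T)
    rw [QuotientGroup.eq, Subgroup.mem_subgroupOf]
    have hcoe : (((g ⟨v, hv⟩)⁻¹ * (⟨w, hw⟩ : ↥T) : ↥T) : Rˣ)
        = (powMonoidHom p v)⁻¹ * w := rfl
    show (((g ⟨v, hv⟩)⁻¹ * (⟨w, hw⟩ : ↥T) : ↥T) : Rˣ) ∈ UU R m
    rw [hcoe, ← hst, inv_mul_cancel_left]
    exact ht
  have hker : ψ.ker = (UU R b).subgroupOf (UU R a) := by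
    ext u
    rw [MonoidHom.mem_ker]
    show QuotientGroup.mk (g u) = 1 ↔ _
    rw [QuotientGroup.eq_one_iff, Subgroup.mem_subgroupOf, Subgroup.mem_subgroupOf]
    show (powMonoidHom p (u : Rˣ)) ∈ UU R m ↔ _
    rw [powMonoidHom_apply, pow_mem_UU_iff hp, ← hb]
  have hcard := Nat.card_congr (QuotientGroup.quotientKerEquivOfSurjective ψ hsurj).toEquiv
  rw [hker] at hcard
  show Nat.card (↥T ⧸ (UU R m).subgroupOf T) = Nat.card (↥(UU R a) ⧸ (UU R b).subgroupOf (UU R a))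
  rw [← hcard]

end CharP

lemma relIndex_map_of_ker_le {G H' : Type*} [Group G] [Group H'] (f : G →* H')
    {B A : Subgroup G} (hker : f.ker ≤ B) :
    (B.map f).relIndex (A.map f) = B.relIndex A := by
  rw [← Subgroup.relIndex_comap, Subgroup.comap_map_eq, sup_of_le_left hker]

end Stmt3Aux

set_option maxHeartbeats 1600000 in
theorem stmt3 (p : ℕ) (hp : p.Prime) (R : Type*) [CommRing R] [IsDomain R]
    [IsDiscreteValuationRing R] [CharP R p]
    (q : ℕ) (hq : Nat.card (IsLocalRing.ResidueField R) = q)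
    (hqfin : Finite (IsLocalRing.ResidueField R))
    (n m : ℕ) (hn : 1 ≤ n) (hnm : n ≤ m) :
    ∃ U : ℕ → Subgroup Rˣ,
      (∀ k : ℕ, ∀ u : Rˣ, u ∈ U k ↔ (u : R) - 1 ∈ (IsLocalRing.maximalIdeal R) ^ k) ∧
      ∀ V : Subgroup ((U 1) ⧸ ((U m).subgroupOf (U 1))),
        V = Subgroup.map (QuotientGroup.mk' ((U m).subgroupOf (U 1)))
              ((U n).subgroupOf (U 1)) →
        (Finite (V ⧸ ((V ⊓ (powMonoidHom
              (α := (U 1) ⧸ ((U m).subgroupOf (U 1))) p).range).subgroupOf V)) ∧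
          Nat.card (V ⧸ ((V ⊓ (powMonoidHom
              (α := (U 1) ⧸ ((U m).subgroupOf (U 1))) p).range).subgroupOf V))
            = q ^ ((m - (m + p - 1) / p) - (n - (n + p - 1) / p))) := by
  classical
  haveI : Fact p.Prime := ⟨hp⟩
  haveI := hqfin
  have hp0 : 0 < p := hp.pos
  have hq0 : 0 < q := by rw [← hq]; exact Nat.card_pos
  refine ⟨Stmt3Aux.UU R, fun k u => Iff.rfl, ?_⟩
  intro V hV
  subst hV
  set a := (n + p - 1) / p with ha
  set b := (m + p - 1) / p with hb
  have hpa : n ≤ p * a := Stmt3Aux.nat_fact1 hp0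
  have hpb : m ≤ p * b := Stmt3Aux.nat_fact1 hp0
  have ha1 : 1 ≤ a := (Nat.one_le_div_iff hp0).mpr (by omega)
  have hab : a ≤ b := Nat.div_le_div_right (by omega)
  have han : a ≤ n := Stmt3Aux.nat_fact2 hp0 (Nat.le_mul_of_pos_left n hp0)
  have hbm : b ≤ m := Stmt3Aux.nat_fact2 hp0 (Nat.le_mul_of_pos_left m hp0)
  have hbam : b ≤ a + (m - n) := by
    apply Stmt3Aux.nat_fact2 hp0
    have h1 : p * (a + (m - n)) = p * a + p * (m - n) := by ring
    have h2 : m - n ≤ p * (m - n) := Nat.le_mul_of_pos_left _ hp0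
    omega
  set U1 : Subgroup Rˣ := Stmt3Aux.UU R 1 with hU1
  set K : Subgroup ↥U1 := (Stmt3Aux.UU R m).subgroupOf U1 with hKdef
  set π : ↥U1 →* (↥U1 ⧸ K) := QuotientGroup.mk' K with hπdef
  set A : Subgroup ↥U1 := (Stmt3Aux.UU R n).subgroupOf U1 with hAdef
  set Fr : Subgroup ↥U1 := (powMonoidHom (α := ↥U1) p).range with hFrdef
  set Pr : Subgroup (↥U1 ⧸ K) := (powMonoidHom (α := ↥U1 ⧸ K) p).range with hPrdef
  set B : Subgroup ↥U1 := A ⊓ (Fr ⊔ K) with hBdef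
  have hsurjπ : Function.Surjective π := QuotientGroup.mk'_surjective K
  have hKA : K ≤ A := by
    intro x hx
    rw [hKdef, Subgroup.mem_subgroupOf] at hx
    rw [hAdef, Subgroup.mem_subgroupOf]
    exact Stmt3Aux.UU_mono hnm hx
  have hKB : K ≤ B := le_inf hKA le_sup_right
  -- Step 1: range of powMonoidHom on the quotient
  have hrange : Pr = Subgroup.map π Fr := by
    have hcomm : (powMonoidHom (α := ↥U1 ⧸ K) p).comp π = π.comp (powMonoidHom p) := by
      ext x
      simp [powMonoidHom_apply]
    have h1 : ((powMonoidHom (α := ↥U1 ⧸ K) p).comp π).range = Pr := by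
      rw [MonoidHom.range_comp, MonoidHom.range_eq_top_of_surjective π hsurjπ]
      rw [← MonoidHom.range_eq_map]
    rw [← h1, hcomm, MonoidHom.range_comp]
  -- Step 2: intersection as an image
  have hinf : Subgroup.map π A ⊓ Pr = Subgroup.map π B := by
    have h1 : Subgroup.comap π (Subgroup.map π A ⊓ Subgroup.map π Fr) = B := by
      rw [Subgroup.comap_inf, Subgroup.comap_map_eq, Subgroup.comap_map_eq,
        QuotientGroup.ker_mk', sup_of_le_left hKA]
    rw [hrange, ← h1, Subgroup.map_comap_eq_self_of_surjective hsurjπ]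
  -- Step 3: B as a subgroupOf
  have hBeq : B = (Stmt3Aux.UU R n ⊓
      (Subgroup.map (powMonoidHom p) (Stmt3Aux.UU R 1) ⊔ Stmt3Aux.UU R m)).subgroupOf U1 := by
    ext u
    rw [hBdef, Subgroup.mem_inf, hAdef, Subgroup.mem_subgroupOf, Subgroup.mem_subgroupOf,
      Subgroup.mem_inf]
    apply and_congr Iff.rfl
    constructor
    · intro h
      obtain ⟨y, hy, z, hz, hyz⟩ := Subgroup.mem_sup.mp h
      obtain ⟨w, rfl⟩ := MonoidHom.mem_range.mp hy
      rw [hKdef, Subgroup.mem_subgroupOf] at hz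
      refine Subgroup.mem_sup.mpr ⟨↑(powMonoidHom (α := ↥U1) p w), ?_, ↑z, hz, ?_⟩
      · have : ((powMonoidHom (α := ↥U1) p w : ↥U1) : Rˣ) = powMonoidHom p (w : Rˣ) := by
          simp [powMonoidHom_apply]
        rw [this]
        exact Subgroup.mem_map_of_mem _ w.2
      · rw [← hyz]; rfl
    · intro h
      obtain ⟨s, hs, t, ht, hst⟩ := Subgroup.mem_sup.mp h
      obtain ⟨v, hv, rfl⟩ := hs
      have htm : t ∈ U1 := Stmt3Aux.UU_mono (by omega) ht
      refine Subgroup.mem_sup.mpr ⟨powMonoidHom p (⟨v, hv⟩ : ↥U1), ⟨⟨v, hv⟩, rfl⟩,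
        ⟨t, htm⟩, ?_, ?_⟩
      · rw [hKdef, Subgroup.mem_subgroupOf]; exact ht
      · apply Subtype.ext
        rw [← hst]
        rfl
  -- Step 4: the relIndex computation at the level of Rˣ
  set Sa : Subgroup Rˣ := Subgroup.map (powMonoidHom p) (Stmt3Aux.UU R a) with hSa
  have hSaUUn : Sa ≤ Stmt3Aux.UU R n := by
    rintro s ⟨v, hv, rfl⟩
    have : v ^ p ∈ Stmt3Aux.UU R n := (Stmt3Aux.pow_mem_UU_iff hp0 v n).mpr hv
    simpa [powMonoidHom_apply] using this
  have hle1 : Stmt3Aux.UU R m ≤ Sa ⊔ Stmt3Aux.UU R m := le_sup_right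
  have hle2 : Sa ⊔ Stmt3Aux.UU R m ≤ Stmt3Aux.UU R n :=
    sup_le hSaUUn (Stmt3Aux.UU_mono hnm)
  have hmulrel := Subgroup.relIndex_mul_relIndex (Stmt3Aux.UU R m)
    (Sa ⊔ Stmt3Aux.UU R m) (Stmt3Aux.UU R n) hle1 hle2
  rw [Stmt3Aux.mid hp0 a m hab] at hmulrel
  have hc1 : (Stmt3Aux.UU R b).relIndex (Stmt3Aux.UU R a) = q ^ (b - a) := by
    have h := Stmt3Aux.core q hq (b - a) ha1
    rwa [show a + (b - a) = b by omega] at h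
  have hc2 : (Stmt3Aux.UU R m).relIndex (Stmt3Aux.UU R n) = q ^ (m - n) := by
    have h := Stmt3Aux.core q hq (m - n) hn
    rwa [show n + (m - n) = m by omega] at h
  rw [hc1, hc2] at hmulrel
  have hXval : (Sa ⊔ Stmt3Aux.UU R m).relIndex (Stmt3Aux.UU R n)
      = q ^ ((m - b) - (n - a)) := by
    apply Nat.eq_of_mul_eq_mul_left (pow_pos hq0 (b - a))
    rw [hmulrel, ← pow_add, show b - a + ((m - b) - (n - a)) = m - n by omega]
  -- Step 5: assemble
  have hkerπ : π.ker ≤ B := by rw [hπdef, QuotientGroup.ker_mk']; exact hKB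
  have hrel : (Subgroup.map π A ⊓ Pr).relIndex (Subgroup.map π A)
      = q ^ ((m - b) - (n - a)) := by
    rw [hinf, Stmt3Aux.relIndex_map_of_ker_le π hkerπ, hBeq, hAdef,
      Subgroup.relIndex_subgroupOf (Stmt3Aux.UU_mono hn),
      Stmt3Aux.claim1 hp0 hn hnm, ← ha, hXval]
  have hcard : Nat.card (↥(Subgroup.map π A) ⧸
      ((Subgroup.map π A ⊓ Pr).subgroupOf (Subgroup.map π A)))
      = q ^ ((m - b) - (n - a)) := by
    rw [← Subgroup.index_eq_card]
    exact hrel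
  exact ⟨Nat.finite_of_card_ne_zero (by rw [hcard]; positivity), hcard⟩
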